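/- Let Y be a K×N real matrix and let D₀ be a K×K invertible real matrix with unit Euclidean-norm columns. Then D₀ is a local (respectively global) minimum of the function D ↦ C₁(D|Y) := inf{‖X‖₁ : X is K×N and D·X = Y} restricted to the set of K×K matrices with unit Euclidean-norm columns if and only if the pair (D₀, D₀⁻¹·Y) is a local (respectively global) minimum of problem (P1'), i.e. of ‖X‖₁ over the set S(Y) of pairs (D,X) with D having unit-norm columns and D·X = Y. -/

import Mathlib

open Matrix Finset
open scoped ENNReal

noncomputable section

/-- Entrywise ℓ1 norm of a matrix: the sum of absolute values of all entries. -/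
def l1Norm {m n : Type*} [Fintype m] [Fintype n] (X : Matrix m n ℝ) : ℝ :=
  ∑ i, ∑ j, |X i j|

/-- The dictionary has unit Euclidean-norm columns. -/
def UnitCols {d K : ℕ} (D : Matrix (Fin d) (Fin K) ℝ) : Prop :=
  ∀ k, ∑ i, (D i k) ^ 2 = 1

/-- The ℓ1 cost `C₁(D|Y) = inf {‖X‖₁ : D·X = Y}` (equal to `+∞` if no `X` exists). -/
def C1 {d K N : ℕ} (D : Matrix (Fin d) (Fin K) ℝ) (Y : Matrix (Fin d) (Fin N) ℝ) : ℝ≥0∞ :=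
  ⨅ (X : Matrix (Fin K) (Fin N) ℝ) (_ : D * X = Y), ENNReal.ofReal (l1Norm X)

/-- `(D₀, X₀)` is a local minimum of problem (P1'). -/
def IsLocalMinP1 {d K N : ℕ} (Y : Matrix (Fin d) (Fin N) ℝ)
    (D₀ : Matrix (Fin d) (Fin K) ℝ) (X₀ : Matrix (Fin K) (Fin N) ℝ) : Prop :=
  ∃ U ∈ nhds (D₀, X₀), ∀ DX ∈ U, UnitCols DX.1 → DX.1 * DX.2 = Y →
    l1Norm X₀ ≤ l1Norm DX.2

lemma l1Norm_nonneg {m n : Type*} [Fintype m] [Fintype n] (X : Matrix m n ℝ) :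
    0 ≤ l1Norm X :=
  Finset.sum_nonneg fun _ _ => Finset.sum_nonneg fun _ _ => abs_nonneg _

lemma C1_le {K N : ℕ} {D : Matrix (Fin K) (Fin K) ℝ} {Y : Matrix (Fin K) (Fin N) ℝ}
    {X : Matrix (Fin K) (Fin N) ℝ} (hX : D * X = Y) :
    C1 D Y ≤ ENNReal.ofReal (l1Norm X) :=
  iInf_le_of_le X (iInf_le _ hX)

lemma C1_eq {K N : ℕ} {D : Matrix (Fin K) (Fin K) ℝ} (Y : Matrix (Fin K) (Fin N) ℝ)
    (h : IsUnit D) : C1 D Y = ENNReal.ofReal (l1Norm (D⁻¹ * Y)) := by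
  have hdet : IsUnit D.det := (Matrix.isUnit_iff_isUnit_det D).mp h
  refine le_antisymm (C1_le ?_) (le_iInf₂ fun X hX => ?_)
  · rw [← Matrix.mul_assoc, Matrix.mul_nonsing_inv D hdet, Matrix.one_mul]
  · have : X = D⁻¹ * Y := by
      rw [← hX, ← Matrix.mul_assoc, Matrix.nonsing_inv_mul D hdet, Matrix.one_mul]
    rw [this]

/-- **Remark (equivalence of (P1) and (P1') for bases).** For a `K×K` invertible
dictionary `D₀` with unit columns: `D₀` is a local (resp. global) minimum of
`D ↦ C₁(D|Y)` restricted to unit-column matrices if and only if `(D₀, D₀⁻¹·Y)` is a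
local (resp. global) minimum of problem (P1'). -/
theorem stmt19 {K N : ℕ} (Y : Matrix (Fin K) (Fin N) ℝ)
    (D₀ : Matrix (Fin K) (Fin K) ℝ) (hunit : UnitCols D₀) (hinv : IsUnit D₀) :
    ((∃ U ∈ nhds D₀, ∀ D ∈ U, UnitCols D → C1 D₀ Y ≤ C1 D Y) ↔
        IsLocalMinP1 Y D₀ (D₀⁻¹ * Y)) ∧
      ((∀ D : Matrix (Fin K) (Fin K) ℝ, UnitCols D → C1 D₀ Y ≤ C1 D Y) ↔
        (∀ (D : Matrix (Fin K) (Fin K) ℝ) (X : Matrix (Fin K) (Fin N) ℝ),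
          UnitCols D → D * X = Y → l1Norm (D₀⁻¹ * Y) ≤ l1Norm X)) := by
  have hC0 : C1 D₀ Y = ENNReal.ofReal (l1Norm (D₀⁻¹ * Y)) := C1_eq Y hinv
  have key : ∀ (D : Matrix (Fin K) (Fin K) ℝ) (X : Matrix (Fin K) (Fin N) ℝ),
      C1 D₀ Y ≤ C1 D Y → D * X = Y → l1Norm (D₀⁻¹ * Y) ≤ l1Norm X := by
    intro D X hle hX
    have := hle.trans (C1_le hX)
    rw [hC0] at this
    exact (ENNReal.ofReal_le_ofReal_iff (l1Norm_nonneg X)).mp this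
  have hdet : IsUnit D₀.det := (Matrix.isUnit_iff_isUnit_det D₀).mp hinv
  constructor
  · constructor
    · rintro ⟨U, hU, hP⟩
      exact ⟨(Prod.fst ⁻¹' U), continuous_fst.continuousAt.preimage_mem_nhds hU,
        fun DX hDX hu hXY => key DX.1 DX.2 (hP DX.1 hDX hu) hXY⟩
    · rintro ⟨U, hU, hP⟩
      -- D ↦ (D, D⁻¹ * Y) is continuous at D₀
      have hfin : ContinuousAt (fun D : Matrix (Fin K) (Fin K) ℝ => (D, D⁻¹ * Y)) D₀ := by
        refine continuousAt_id.prodMk ?_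
        have hinvc : ContinuousAt (Inv.inv : Matrix (Fin K) (Fin K) ℝ → _) D₀ := by
          apply continuousAt_matrix_inv
          rw [Ring.inverse_eq_inv']
          exact continuousAt_inv₀ hdet.ne_zero
        exact ((continuous_id.matrix_mul continuous_const).continuousAt).comp hinvc
      have hdetopen : IsOpen {D : Matrix (Fin K) (Fin K) ℝ | D.det ≠ 0} :=
        isOpen_compl_iff.mpr (isClosed_singleton.preimage
          (Continuous.matrix_det continuous_id))
      have hV : (fun D : Matrix (Fin K) (Fin K) ℝ => (D, D⁻¹ * Y)) ⁻¹' U ∩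
          {D | D.det ≠ 0} ∈ nhds D₀ := by
        refine Filter.inter_mem (hfin.preimage_mem_nhds hU) ?_
        exact hdetopen.mem_nhds hdet.ne_zero
      refine ⟨_, hV, fun D hD hu => ?_⟩
      obtain ⟨hD1, hD2⟩ := hD
      have hDu : IsUnit D := (Matrix.isUnit_iff_isUnit_det D).mpr (isUnit_iff_ne_zero.mpr hD2)
      rw [hC0, C1_eq Y hDu]
      refine ENNReal.ofReal_le_ofReal ?_
      refine hP (D, D⁻¹ * Y) hD1 hu ?_
      rw [← Matrix.mul_assoc,
        Matrix.mul_nonsing_inv D ((Matrix.isUnit_iff_isUnit_det D).mp hDu), Matrix.one_mul]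
  · constructor
    · intro h D X hu hXY
      exact key D X (h D hu) hXY
    · intro h D hu
      rw [hC0]
      exact le_iInf₂ fun X hX => ENNReal.ofReal_le_ofReal (h D X hu hX)
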